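/- Every 2-connected split graph G with partition (K, I), K a maximum clique, in which every vertex of K has at most one neighbor in I (Δ^I ≤ 1), has a Hamiltonian cycle. -/

import Mathlib

open SimpleGraph

variable {V : Type*}

/-- `I` is an independent set in `G`. -/
def IndepOn (G : SimpleGraph V) (I : Set V) : Prop :=
  ∀ ⦃u⦄, u ∈ I → ∀ ⦃v⦄, v ∈ I → ¬ G.Adj u v

/-- `(K, I)` is a split partition of `G`: `K` a clique, `I` independent,
partitioning the vertex set. -/
def SplitPartition (G : SimpleGraph V) (K I : Set V) : Prop :=
  Disjoint K I ∧ K ∪ I = Set.univ ∧ G.IsClique K ∧ IndepOn G I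

/-- `K` is a maximum clique of `G`. -/
def MaxClique (G : SimpleGraph V) (K : Set V) : Prop :=
  G.IsClique K ∧ ∀ K' : Set V, G.IsClique K' → K'.ncard ≤ K.ncard

/-- `G` is 2-connected: at least 3 vertices and deleting any single vertex
leaves a connected graph. -/
def TwoConnected (G : SimpleGraph V) [Fintype V] : Prop :=
  3 ≤ Fintype.card V ∧ ∀ v : V, (G.induce (({v} : Set V)ᶜ)).Connected

/-- `G` has a Hamiltonian cycle (a spanning cycle). -/
def HasHamCycle (G : SimpleGraph V) : Prop :=
  letI := Classical.decEq V
  ∃ (a : V) (p : G.Walk a a), p.IsHamiltonianCycle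

namespace HamAux

/-- Build a walk from `a` to `b` whose intermediate vertices are `l`. -/
def buildWalk (G : SimpleGraph V) : (l : List V) → (a b : V) →
    List.Chain G.Adj a (l ++ [b]) → G.Walk a b
  | [], a, b, h => Walk.cons (by cases h with | cons_cons h _ => exact h) Walk.nil
  | c :: l, a, b, h => Walk.cons (by cases h with | cons_cons h _ => exact h)
      (buildWalk G l c b (by cases h with | cons_cons _ h => exact h))

@[simp] lemma support_buildWalk (G : SimpleGraph V) :
    ∀ (l : List V) (a b : V) (h : List.Chain G.Adj a (l ++ [b])),
      (buildWalk G l a b h).support = a :: (l ++ [b])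
  | [], a, b, h => by simp [buildWalk]
  | c :: l, a, b, h => by
    simp [buildWalk, support_buildWalk G l c b]

lemma length_buildWalk (G : SimpleGraph V) :
    ∀ (l : List V) (a b : V) (h : List.Chain G.Adj a (l ++ [b])),
      (buildWalk G l a b h).length = l.length + 1
  | [], a, b, h => by simp [buildWalk]
  | c :: l, a, b, h => by
    simp [buildWalk, length_buildWalk G l c b]

lemma not_mem_edges {G : SimpleGraph V} {u w : V} (p : G.Walk u w) (hp : p.IsPath)
    (h2 : 2 ≤ p.length) : s(w, u) ∉ p.edges := by
  cases p with
  | nil => simp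
  | @cons _ x _ h q =>
    intro hmem
    have hq : q.IsPath := (SimpleGraph.Walk.cons_isPath_iff _ _ |>.mp hp).1
    have hu : u ∉ q.support := (SimpleGraph.Walk.cons_isPath_iff _ _ |>.mp hp).2
    rw [SimpleGraph.Walk.edges_cons, List.mem_cons] at hmem
    rcases hmem with hmem | hmem
    · -- s(w,u) = s(u,x)
      rw [Sym2.eq_iff] at hmem
      have hq1 : 1 ≤ q.length := by
        simpa using h2
      -- q is a path of positive length from x to w, so x ≠ w
      have hxw : x ≠ w := by
        cases q with
        | nil => simp at hq1
        | @cons _ y _ h' r =>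
          have : x ∉ r.support := (SimpleGraph.Walk.cons_isPath_iff _ _ |>.mp hq).2
          exact fun hxweq => this (hxweq ▸ r.end_mem_support)
      rcases hmem with ⟨hwu, hux⟩ | ⟨hwx, _⟩
      · exact hxw (hux ▸ hwu ▸ rfl)
      · exact hxw hwx.symm
    · exact hu (SimpleGraph.Walk.snd_mem_support_of_mem_edges q hmem)

lemma hasHamCycle_of_list [Fintype V] (G : SimpleGraph V) (a : V) (l : List V)
    (hch : List.Chain G.Adj a (l ++ [a])) (hnd : (a :: l).Nodup)
    (hlen : 2 ≤ l.length) (hmem : ∀ v : V, v ∈ a :: l) : HasHamCycle G := by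
  classical
  match l, hch, hnd, hlen, hmem with
  | b :: l', hch, hnd, hlen, hmem =>
    have hab : G.Adj a b := by cases hch with | cons_cons h _ => exact h
    have hch' : List.Chain G.Adj b (l' ++ [a]) := by
      cases hch with
      | cons_cons _ h => exact h
    set p : G.Walk b a := buildWalk G l' b a hch' with hp
    have hsupp : p.support = b :: (l' ++ [a]) := support_buildWalk G l' b a hch'
    have hndl : (b :: l').Nodup := hnd.of_cons
    have hanotin : a ∉ b :: l' := (List.nodup_cons.mp hnd).1
    have hpath : p.IsPath := by
      apply SimpleGraph.Walk.IsPath.mk'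
      rw [hsupp]
      have : (b :: l' ++ [a]).Nodup := by
        rw [List.nodup_append]
        refine ⟨hndl, List.nodup_singleton a, ?_⟩
        intro x hx y hy; rw [List.mem_singleton] at hy; subst hy; exact fun h => hanotin (h ▸ hx)
      simpa using this
    have hlenp : 2 ≤ p.length := by
      rw [hp, length_buildWalk]
      have : l' ≠ [] := by
        intro h; rw [h] at hlen; simp at hlen
      have := List.length_pos_of_ne_nil this
      omega
    have hedge : s(a, b) ∉ p.edges := not_mem_edges p hpath hlenp
    refine ⟨a, Walk.cons hab p, ?_⟩
    rw [SimpleGraph.Walk.isHamiltonianCycle_iff_isCycle_and_support_count_tail_eq_one]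
    constructor
    · rw [SimpleGraph.Walk.cons_isCycle_iff]
      exact ⟨hpath, hedge⟩
    · intro v
      have htail : (Walk.cons hab p).support.tail = b :: (l' ++ [a]) := by
        simp [hsupp]
      rw [htail]
      apply List.count_eq_one_of_mem
      · rw [show b :: (l' ++ [a]) = (b :: l') ++ [a] by simp, List.nodup_append]
        exact ⟨hndl, List.nodup_singleton a, fun x hx y hy => by simp at hy; subst hy; exact fun h => hanotin (h ▸ hx)⟩
      · have := hmem v
        rcases List.mem_cons.mp this with h | h
        · subst h; simp
        · rcases List.mem_cons.mp h with h | h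
          · subst h; simp
          · simp [h]

end HamAux

namespace HamAux

/-- Auxiliary: every vertex of a 2-connected-ish graph has two distinct neighbors. -/
lemma two_neighbors [Fintype V] (G : SimpleGraph V) (hcard : 3 ≤ Fintype.card V)
    (hconn : ∀ w : V, (G.induce (({w} : Set V)ᶜ)).Connected) (v : V) :
    ∃ a b : V, a ≠ b ∧ G.Adj v a ∧ G.Adj v b := by
  classical
  have key : ∀ w : V, v ≠ w → (∀ x, G.Adj v x → x = w) → False := by
    intro w hvw hnb
    obtain ⟨u, huv, huw⟩ : ∃ u : V, u ≠ v ∧ u ≠ w := by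
      by_contra h
      push_neg at h
      have hsub : (Finset.univ : Finset V) ⊆ {v, w} := by
        intro u _
        rcases eq_or_ne u v with rfl | hne
        · simp
        · simp [h u hne]
      have h1 := Finset.card_le_card hsub
      have h2 : ({v, w} : Finset V).card ≤ 2 := by
        apply le_trans (Finset.card_insert_le _ _); simp
      rw [Finset.card_univ] at h1
      omega
    have hv : v ∈ (({w} : Set V)ᶜ) := by simpa using hvw
    have hu : u ∈ (({w} : Set V)ᶜ) := by simpa using huw
    obtain ⟨p⟩ := (hconn w).preconnected ⟨v, hv⟩ ⟨u, hu⟩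
    have hne : (⟨v, hv⟩ : ↥(({w} : Set V)ᶜ)) ≠ ⟨u, hu⟩ := by
      simp [Subtype.ext_iff, huv.symm]
    have hnn := SimpleGraph.Walk.not_nil_of_ne hne (p := p)
    rw [SimpleGraph.Walk.not_nil_iff] at hnn
    obtain ⟨y, hadj, q, rfl⟩ := hnn
    have hGadj : G.Adj v ↑y := hadj
    have : (y : V) = w := hnb y hGadj
    exact y.2 (by simp [this])
  by_contra hno
  push_neg at hno
  have honly : ∀ x y : V, G.Adj v x → G.Adj v y → x = y := by
    intro x y hx hy
    by_contra hne
    exact (hno x y hne hx) hy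
  by_cases hex : ∃ x, G.Adj v x
  · obtain ⟨x, hx⟩ := hex
    exact key x hx.ne (fun y hy => honly y x hy hx)
  · push_neg at hex
    have : Nontrivial V := Fintype.one_lt_card_iff_nontrivial.mp (by omega)
    obtain ⟨w, hw⟩ := exists_ne v
    exact key w hw.symm (fun x hx => absurd hx (hex x))

/-- Build the cyclic order: for each independent vertex `v` insert `fa v, v, fb v`,
then append the remaining clique vertices. -/
def mkL (fa fb : V → V) (rest : List V) : List V → List V
  | [] => rest
  | v :: t => fa v :: v :: fb v :: mkL fa fb rest t

lemma mem_mkL {fa fb : V → V} {rest : List V} {x : V} :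
    ∀ {t : List V}, x ∈ mkL fa fb rest t ↔
      (∃ v ∈ t, x = fa v ∨ x = v ∨ x = fb v) ∨ x ∈ rest
  | [] => by simp [mkL]
  | v :: t => by
    simp only [mkL, List.mem_cons, mem_mkL (t := t)]
    constructor
    · rintro (rfl | rfl | rfl | (⟨v', hv', h⟩ | hr))
      · exact Or.inl ⟨v, Or.inl rfl, Or.inl rfl⟩
      · exact Or.inl ⟨x, Or.inl rfl, Or.inr (Or.inl rfl)⟩
      · exact Or.inl ⟨v, Or.inl rfl, Or.inr (Or.inr rfl)⟩
      · exact Or.inl ⟨v', Or.inr hv', h⟩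
      · exact Or.inr hr
    · rintro (⟨v', hv', h⟩ | hr)
      · rcases hv' with rfl | hv'
        · rcases h with rfl | rfl | rfl
          · exact Or.inl rfl
          · exact Or.inr (Or.inl rfl)
          · exact Or.inr (Or.inr (Or.inl rfl))
        · exact Or.inr (Or.inr (Or.inr (Or.inl ⟨v', hv', h⟩)))
      · exact Or.inr (Or.inr (Or.inr (Or.inr hr)))

end HamAux

/-- A 2-connected split graph in which every clique vertex has at most one
neighbor in the independent set has a Hamiltonian cycle. -/
theorem twoConnected_deltaI_le_one_hamiltonian [Fintype V] (G : SimpleGraph V)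
    (K I : Set V) (hsplit : SplitPartition G K I) (hmax : MaxClique G K)
    (h2 : TwoConnected G)
    (hub : ∀ v ∈ K, (G.neighborSet v ∩ I).ncard ≤ 1) :
    HasHamCycle G := by
  classical
  obtain ⟨hcard, hconn⟩ := h2
  obtain ⟨hdis, huniv, hKcl, hInd⟩ := hsplit
  have hKI : ∀ x : V, x ∈ K ∨ x ∈ I := by
    intro x
    have : x ∈ K ∪ I := huniv ▸ Set.mem_univ x
    exact this
  have hnKI : ∀ x : V, x ∈ K → x ∈ I → False := fun x hK hI =>
    Set.disjoint_left.mp hdis hK hI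
  -- every independent vertex has two distinct neighbors, necessarily in K
  have hI2 : ∀ v : V, ∃ a b : V,
      v ∈ I → a ≠ b ∧ a ∈ K ∧ b ∈ K ∧ G.Adj v a ∧ G.Adj v b := by
    intro v
    by_cases hv : v ∈ I
    · obtain ⟨a, b, hab, ha, hb⟩ := HamAux.two_neighbors G hcard hconn v
      have haK : a ∈ K := by
        rcases hKI a with h | h
        · exact h
        · exact absurd ha (hInd hv h)
      have hbK : b ∈ K := by
        rcases hKI b with h | h
        · exact h
        · exact absurd hb (hInd hv h)
      exact ⟨a, b, fun _ => ⟨hab, haK, hbK, ha, hb⟩⟩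
    · exact ⟨v, v, fun h => absurd h hv⟩
  choose fa fb hf using hI2
  -- disjointness of the chosen pairs, by the Δᴵ ≤ 1 hypothesis
  have hdisj : ∀ v ∈ I, ∀ v' ∈ I, ∀ x : V,
      (x = fa v ∨ x = fb v) → (x = fa v' ∨ x = fb v') → v = v' := by
    intro v hv v' hv' x h1 h2
    have hxK : x ∈ K := by
      rcases h1 with rfl | rfl
      · exact (hf v hv).2.1
      · exact (hf v hv).2.2.1
    have hAdj : G.Adj x v := by
      rcases h1 with rfl | rfl
      · exact (hf v hv).2.2.2.1.symm
      · exact (hf v hv).2.2.2.2.symm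
    have hAdj' : G.Adj x v' := by
      rcases h2 with rfl | rfl
      · exact (hf v' hv').2.2.2.1.symm
      · exact (hf v' hv').2.2.2.2.symm
    have hle := hub x hxK
    rw [Set.ncard_le_one (Set.toFinite _)] at hle
    exact hle v ⟨hAdj, hv⟩ v' ⟨hAdj', hv'⟩
  -- enumerations
  set vs : List V := (Set.toFinite I).toFinset.toList with hvs_def
  have hvs_mem : ∀ x : V, x ∈ vs ↔ x ∈ I := by
    intro x; simp [hvs_def]
  have hvs_nd : vs.Nodup := Finset.nodup_toList _
  set P : Set V := {x | ∃ v ∈ I, x = fa v ∨ x = fb v} with hP_def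
  set rest : List V := (Set.toFinite (K \ P)).toFinset.toList with hrest_def
  have hrest_mem : ∀ x : V, x ∈ rest ↔ x ∈ K ∧ x ∉ P := by
    intro x; simp only [hrest_def, Finset.mem_toList, Set.Finite.mem_toFinset]; exact Iff.rfl
  have hrest_nd : rest.Nodup := Finset.nodup_toList _
  have hrest_pw : ∀ l : List V, l.Nodup → (∀ x ∈ l, x ∈ K) → List.Chain' G.Adj l := by
    intro l hnd hsub
    exact (hnd.pairwise_of_forall_ne fun a ha b hb hne =>
      hKcl (hsub a ha) (hsub b hb) hne).isChain
  -- nodup of the constructed list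
  have nodup_mkL : ∀ t : List V, t.Nodup → (∀ v ∈ t, v ∈ I) →
      (HamAux.mkL fa fb rest t).Nodup := by
    intro t
    induction t with
    | nil => intro _ _; exact hrest_nd
    | cons v t ih =>
      intro hnd hsub
      have hv : v ∈ I := hsub v (List.mem_cons_self ..)
      have hvt : v ∉ t := (List.nodup_cons.mp hnd).1
      have hfa := hf v hv
      have hfaP : fa v ∈ P := ⟨v, hv, Or.inl rfl⟩
      have hfbP : fb v ∈ P := ⟨v, hv, Or.inr rfl⟩
      have hnotin : ∀ x : V, x ∈ K → (x = fa v ∨ x = fb v) →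
          x ∉ HamAux.mkL fa fb rest t := by
        intro x hxK hxeq hmem
        rcases HamAux.mem_mkL.mp hmem with ⟨v', hv', h⟩ | hr
        · have hv'I : v' ∈ I := hsub v' (List.mem_cons_of_mem _ hv')
          rcases h with h | h | h
          · exact hvt ((hdisj v hv v' hv'I x hxeq (Or.inl h)) ▸ hv')
          · exact hnKI x hxK (h ▸ hv'I)
          · exact hvt ((hdisj v hv v' hv'I x hxeq (Or.inr h)) ▸ hv')
        · have hxP : x ∈ P := by rcases hxeq with rfl | rfl <;> assumption
          exact ((hrest_mem x).mp hr).2 hxP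
      have hvnotin : v ∉ HamAux.mkL fa fb rest t := by
        intro hmem
        rcases HamAux.mem_mkL.mp hmem with ⟨v', hv', h⟩ | hr
        · have hv'I : v' ∈ I := hsub v' (List.mem_cons_of_mem _ hv')
          rcases h with h | h | h
          · exact hnKI (fa v') (hf v' hv'I).2.1 (by rwa [h] at hv)
          · exact hvt (h ▸ hv')
          · exact hnKI (fb v') (hf v' hv'I).2.2.1 (by rwa [h] at hv)
        · exact hnKI v ((hrest_mem v).mp hr).1 hv
      have ihh := ih (List.nodup_cons.mp hnd).2
        (fun v' hv' => hsub v' (List.mem_cons_of_mem _ hv'))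
      show (fa v :: v :: fb v :: HamAux.mkL fa fb rest t).Nodup
      refine List.nodup_cons.mpr ⟨?_, List.nodup_cons.mpr ⟨?_, List.nodup_cons.mpr ⟨?_, ihh⟩⟩⟩
      · intro hmem
        rcases List.mem_cons.mp hmem with h | hmem
        · exact hnKI (fa v) hfa.2.1 (by rwa [← h] at hv)
        · rcases List.mem_cons.mp hmem with h | hmem
          · exact hfa.1 h
          · exact hnotin (fa v) hfa.2.1 (Or.inl rfl) hmem
      · intro hmem
        rcases List.mem_cons.mp hmem with h | hmem
        · exact hnKI (fb v) hfa.2.2.1 (by rwa [h] at hv)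
        · exact hvnotin hmem
      · exact hnotin (fb v) hfa.2.2.1 (Or.inr rfl)
  -- chain property and head membership
  have chain_mkL : ∀ t : List V, t.Nodup → (∀ v ∈ t, v ∈ I) →
      List.Chain' G.Adj (HamAux.mkL fa fb rest t) ∧
      (∀ x : V, (HamAux.mkL fa fb rest t).head? = some x →
        x ∈ K ∧ (x ∈ P → ∃ v ∈ t, x = fa v ∨ x = fb v)) := by
    intro t
    induction t with
    | nil =>
      intro _ _
      constructor
      · exact hrest_pw rest hrest_nd (fun x hx => ((hrest_mem x).mp hx).1)
      · intro x hx
        have hxr : x ∈ rest := List.mem_of_mem_head? hx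
        exact ⟨((hrest_mem x).mp hxr).1, fun hP => absurd hP ((hrest_mem x).mp hxr).2⟩
    | cons v t ih =>
      intro hnd hsub
      have hv : v ∈ I := hsub v (List.mem_cons_self ..)
      have hvt : v ∉ t := (List.nodup_cons.mp hnd).1
      have hfa := hf v hv
      obtain ⟨ihc, ihh⟩ := ih (List.nodup_cons.mp hnd).2
        (fun v' hv' => hsub v' (List.mem_cons_of_mem _ hv'))
      constructor
      · show List.Chain' G.Adj (fa v :: v :: fb v :: HamAux.mkL fa fb rest t)
        refine List.isChain_cons_cons.mpr ⟨hfa.2.2.2.1.symm, List.isChain_cons_cons.mpr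
          ⟨hfa.2.2.2.2, ?_⟩⟩
        cases hmk : HamAux.mkL fa fb rest t with
        | nil => simp
        | cons h r =>
          rw [hmk] at ihc ihh
          refine List.isChain_cons_cons.mpr ⟨?_, ihc⟩
          obtain ⟨hhK, hhP⟩ := ihh h rfl
          have hne : fb v ≠ h := by
            intro heq
            obtain ⟨v', hv', h'⟩ := hhP (heq ▸ ⟨v, hv, Or.inr rfl⟩)
            exact hvt ((hdisj v hv v' (hsub v' (List.mem_cons_of_mem _ hv'))
              h (Or.inr heq.symm) h') ▸ hv')
          exact hKcl hfa.2.2.1 hhK hne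
      · intro x hx
        have hxeq : fa v = x := by
          simpa [HamAux.mkL] using hx
        subst hxeq
        exact ⟨hfa.2.1, fun _ => ⟨v, List.mem_cons_self .., Or.inl rfl⟩⟩
  -- last vertex is in K
  have last_mkL : ∀ t : List V, (∀ v ∈ t, v ∈ I) →
      ∀ x : V, (HamAux.mkL fa fb rest t).getLast? = some x → x ∈ K := by
    intro t
    induction t with
    | nil =>
      intro _ x hx
      have : x ∈ rest := List.mem_of_mem_getLast? hx
      exact ((hrest_mem x).mp this).1
    | cons v t ih =>
      intro hsub x hx
      have hv : v ∈ I := hsub v (List.mem_cons_self ..)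
      have hsub' : ∀ v' ∈ t, v' ∈ I := fun v' hv' => hsub v' (List.mem_cons_of_mem _ hv')
      show x ∈ K
      have hx' : (fa v :: v :: fb v :: HamAux.mkL fa fb rest t).getLast? = some x := hx
      rw [List.getLast?_cons_cons, List.getLast?_cons_cons] at hx'
      cases hmk : HamAux.mkL fa fb rest t with
      | nil =>
        rw [hmk] at hx'
        simp at hx'
        exact hx' ▸ (hf v hv).2.2.1
      | cons h r =>
        rw [hmk, List.getLast?_cons_cons] at hx'
        exact ih hsub' x (hmk ▸ hx')
  -- assemble
  have hvsI : ∀ v ∈ vs, v ∈ I := fun v hv => (hvs_mem v).mp hv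
  have hLmem : ∀ x : V, x ∈ HamAux.mkL fa fb rest vs := by
    intro x
    rcases hKI x with hxK | hxI
    · by_cases hxP : x ∈ P
      · obtain ⟨v, hv, h⟩ := hxP
        refine HamAux.mem_mkL.mpr (Or.inl ⟨v, (hvs_mem v).mpr hv, ?_⟩)
        rcases h with h | h
        · exact Or.inl h
        · exact Or.inr (Or.inr h)
      · exact HamAux.mem_mkL.mpr (Or.inr ((hrest_mem x).mpr ⟨hxK, hxP⟩))
    · exact HamAux.mem_mkL.mpr (Or.inl ⟨x, (hvs_mem x).mpr hxI, Or.inr (Or.inl rfl)⟩)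
  have hLnd : (HamAux.mkL fa fb rest vs).Nodup := nodup_mkL vs hvs_nd hvsI
  obtain ⟨hLch, hLhead⟩ := chain_mkL vs hvs_nd hvsI
  have hLlen : 3 ≤ (HamAux.mkL fa fb rest vs).length := by
    have hsub : (Finset.univ : Finset V) ⊆ (HamAux.mkL fa fb rest vs).toFinset :=
      fun x _ => List.mem_toFinset.mpr (hLmem x)
    have h1 := Finset.card_le_card hsub
    rw [Finset.card_univ, List.toFinset_card_of_nodup hLnd] at h1
    omega
  cases hL : HamAux.mkL fa fb rest vs with
  | nil => rw [hL] at hLlen; simp at hLlen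
  | cons a l =>
    rw [hL] at hLch hLnd hLmem hLlen hLhead
    have hlne : l ≠ [] := by
      intro h; rw [h] at hLlen; simp at hLlen
    have haK : a ∈ K := (hLhead a rfl).1
    have hlastK : (a :: l).getLast (by simp) ∈ K := by
      apply last_mkL vs hvsI
      rw [hL]
      exact List.getLast?_eq_getLast _
    have hlast_ne : (a :: l).getLast (by simp) ≠ a := by
      rw [List.getLast_cons hlne]
      intro h
      exact (List.nodup_cons.mp hLnd).1 (h ▸ List.getLast_mem hlne)
    have hclose : G.Adj ((a :: l).getLast (by simp)) a :=
      hKcl hlastK haK hlast_ne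
    have hch2 : List.Chain' G.Adj ((a :: l) ++ [a]) := by
      show List.IsChain G.Adj ((a :: l) ++ [a])
      rw [List.isChain_append]
      refine ⟨hLch, List.isChain_singleton a, ?_⟩
      intro x hx y hy
      simp only [List.head?_cons, Option.mem_def, Option.some.injEq] at hy
      subst hy
      rw [List.getLast?_eq_getLast (by simp)] at hx
      simp only [Option.mem_def, Option.some.injEq] at hx
      exact hx ▸ hclose
    have hchain : List.Chain G.Adj a (l ++ [a]) := by
      rw [List.cons_append] at hch2
      exact hch2
    have hnd2 : (a :: l).Nodup := hLnd
    have hlen2 : 2 ≤ l.length := by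
      simp only [List.length_cons] at hLlen; omega
    exact HamAux.hasHamCycle_of_list G a l hchain hnd2 hlen2 hLmem
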